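/- Let f_Z(z) = ρ^{m₁} m₁^{m₁} m₂^{m₂} Γ(m₁+m₂)/(Γ(m₁)Γ(m₂)) · z^{m₂−1}/(m₂ z + ρ m₁)^{m₁+m₂} with ρ, m₁, m₂ > 0. Then lim_{b→∞} f_Z(b)·b²·log(b) = ∞ if and only if m₁ ≤ 1. -/

import Mathlib

noncomputable def ratioPDF (m₁ m₂ ρ z : ℝ) : ℝ :=
  ρ ^ m₁ * m₁ ^ m₁ * m₂ ^ m₂ * Real.Gamma (m₁ + m₂) / (Real.Gamma m₁ * Real.Gamma m₂)
    * z ^ (m₂ - 1) / (m₂ * z + ρ * m₁) ^ (m₁ + m₂)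

open Filter Real

lemma factored_eq (m₁ m₂ ρ : ℝ) (hm₁ : 0 < m₁) (hm₂ : 0 < m₂) (hρ : 0 < ρ) :
    ∀ᶠ b in atTop, ratioPDF m₁ m₂ ρ b * b ^ 2 * Real.log b
      = (ρ ^ m₁ * m₁ ^ m₁ * m₂ ^ m₂ * Real.Gamma (m₁ + m₂) / (Real.Gamma m₁ * Real.Gamma m₂))
          * ((b / (m₂ * b + ρ * m₁)) ^ (m₁ + m₂)) * (b ^ (1 - m₁) * Real.log b) := by
  filter_upwards [eventually_gt_atTop 0] with b hb
  have hden : 0 < m₂ * b + ρ * m₁ := by positivity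
  have key : b ^ (m₂ - 1) * b ^ (2:ℕ) = b ^ (m₁ + m₂) * b ^ (1 - m₁) := by
    rw [← Real.rpow_natCast b 2, ← Real.rpow_add hb, ← Real.rpow_add hb]
    congr 1
    push_cast
    ring
  set C := ρ ^ m₁ * m₁ ^ m₁ * m₂ ^ m₂ * Real.Gamma (m₁ + m₂) / (Real.Gamma m₁ * Real.Gamma m₂)
  calc ratioPDF m₁ m₂ ρ b * b ^ 2 * Real.log b
      = C / (m₂ * b + ρ * m₁) ^ (m₁ + m₂) * (b ^ (m₂ - 1) * b ^ (2:ℕ)) * Real.log b := by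
        unfold ratioPDF; ring
    _ = C / (m₂ * b + ρ * m₁) ^ (m₁ + m₂) * (b ^ (m₁ + m₂) * b ^ (1 - m₁)) * Real.log b := by
        rw [key]
    _ = C * (b ^ (m₁ + m₂) / (m₂ * b + ρ * m₁) ^ (m₁ + m₂)) * (b ^ (1 - m₁) * Real.log b) := by
        ring
    _ = C * ((b / (m₂ * b + ρ * m₁)) ^ (m₁ + m₂)) * (b ^ (1 - m₁) * Real.log b) := by
        rw [Real.div_rpow hb.le hden.le]

theorem tail_condition_iff (m₁ m₂ ρ : ℝ) (hm₁ : 0 < m₁) (hm₂ : 0 < m₂) (hρ : 0 < ρ) :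
    Filter.Tendsto (fun b => ratioPDF m₁ m₂ ρ b * b ^ 2 * Real.log b)
        Filter.atTop Filter.atTop ↔ m₁ ≤ 1 := by
  set C := ρ ^ m₁ * m₁ ^ m₁ * m₂ ^ m₂ * Real.Gamma (m₁ + m₂) / (Real.Gamma m₁ * Real.Gamma m₂)
    with hCdef
  have hCpos : 0 < C := by
    have h1 := Real.Gamma_pos_of_pos hm₁
    have h2 := Real.Gamma_pos_of_pos hm₂
    have h3 := Real.Gamma_pos_of_pos (add_pos hm₁ hm₂)
    positivity
  -- quotient factor tends to (1/m₂)^(m₁+m₂)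
  have hq0 : Tendsto (fun b : ℝ => b / (m₂ * b + ρ * m₁)) atTop (nhds (1 / m₂)) := by
    have h1 : Tendsto (fun b : ℝ => m₂ + ρ * m₁ / b) atTop (nhds (m₂ + 0)) :=
      tendsto_const_nhds.add (Tendsto.div_atTop tendsto_const_nhds tendsto_id)
    rw [add_zero] at h1
    have h2 := h1.inv₀ hm₂.ne'
    rw [← one_div] at h2
    refine h2.congr' ?_
    filter_upwards [eventually_gt_atTop 0] with b hb
    rw [inv_eq_one_div]
    field_simp
  have hq : Tendsto (fun b : ℝ => (b / (m₂ * b + ρ * m₁)) ^ (m₁ + m₂)) atTop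
      (nhds ((1 / m₂) ^ (m₁ + m₂))) :=
    hq0.rpow_const (Or.inl (by positivity))
  have hfac := factored_eq m₁ m₂ ρ hm₁ hm₂ hρ
  have hL : 0 < C * (1 / m₂) ^ (m₁ + m₂) := by positivity
  have hCq : Tendsto (fun b : ℝ => C * (b / (m₂ * b + ρ * m₁)) ^ (m₁ + m₂)) atTop
      (nhds (C * (1 / m₂) ^ (m₁ + m₂))) := tendsto_const_nhds.mul hq
  constructor
  · intro h
    by_contra hm
    push_neg at hm
    -- b ^ (1 - m₁) * log b → 0
    have hlit := isLittleO_log_rpow_atTop (by linarith : (0:ℝ) < m₁ - 1)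
    have hzero : Tendsto (fun b : ℝ => b ^ (1 - m₁) * Real.log b) atTop (nhds 0) := by
      have := hlit.tendsto_div_nhds_zero
      refine this.congr' ?_
      filter_upwards [eventually_gt_atTop 0] with b hb
      rw [div_eq_mul_inv, ← Real.rpow_neg hb.le, mul_comm]
      congr 2
      ring
    have h0 : Tendsto (fun b => ratioPDF m₁ m₂ ρ b * b ^ 2 * Real.log b) atTop (nhds 0) := by
      have := hCq.mul hzero
      rw [mul_zero] at this
      exact this.congr' (hfac.mono fun b hb => hb.symm)
    have h1 := h.eventually_ge_atTop 1
    have h2 : ∀ᶠ b in atTop, ratioPDF m₁ m₂ ρ b * b ^ 2 * Real.log b < 1 :=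
      h0.eventually_lt_const one_pos
    obtain ⟨b, hb1, hb2⟩ := (h1.and h2).exists
    linarith
  · intro hm
    have hlog : Tendsto (fun b : ℝ => b ^ (1 - m₁) * Real.log b) atTop atTop := by
      rcases lt_or_eq_of_le hm with hlt | heq
      · exact (tendsto_rpow_atTop (by linarith)).atTop_mul_atTop₀ Real.tendsto_log_atTop
      · refine Real.tendsto_log_atTop.congr' ?_
        filter_upwards [eventually_gt_atTop 0] with b hb
        rw [heq, sub_self, Real.rpow_zero, one_mul]
    have := Filter.Tendsto.pos_mul_atTop hL hCq hlog
    exact Tendsto.congr' (hfac.mono fun b hb => hb.symm) this
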